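/- arXiv:2008.09216 — 12 statements merged into one kernel-verified Lean document; each statement's English description precedes it below -/
import Mathlib

section
/- Let e be a positive non-square integer. Then there do not exist integers a₁, b₁, a₂, b₂ and integers m₁, m₂ > 1 such that a₁ > 0, a₁² − e·b₁² > 0, a₂ > 0, a₂² − e·b₂² > 0, and the three equations 2a₁² − 2e·b₁² = m₁² − 1, 2a₂² − 2e·b₂² = m₂² − 1, and 2a₁a₂ − 2e·b₁b₂ = m₁·m₂ all hold. -/
/-- On a principally polarized abelian surface with `End(X) = ℤ[√e]` (e > 0 non-square),
two ample classes `Lᵢ = aᵢL₀ + bᵢL_∞` can never satisfy `L₁² = m₁² - 1`, `L₂² = m₂² - 1`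
and `L₁·L₂ = m₁m₂` with `m₁, m₂ > 1`. -/
theorem no_two_submaximal_case1 (e : ℤ) (he : 0 < e) (hns : ¬ IsSquare e) :
    ¬ ∃ (a₁ b₁ a₂ b₂ m₁ m₂ : ℤ), 1 < m₁ ∧ 1 < m₂ ∧
      0 < a₁ ∧ 0 < a₁ ^ 2 - e * b₁ ^ 2 ∧
      0 < a₂ ∧ 0 < a₂ ^ 2 - e * b₂ ^ 2 ∧
      2 * a₁ ^ 2 - 2 * e * b₁ ^ 2 = m₁ ^ 2 - 1 ∧
      2 * a₂ ^ 2 - 2 * e * b₂ ^ 2 = m₂ ^ 2 - 1 ∧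
      2 * a₁ * a₂ - 2 * e * b₁ * b₂ = m₁ * m₂ := by
  rintro ⟨a₁, b₁, a₂, b₂, m₁, m₂, _, _, _, _, _, _, h1, h2, h3⟩
  have ho1 : Odd (m₁ ^ 2) := ⟨a₁ ^ 2 - e * b₁ ^ 2, by linarith⟩
  have ho2 : Odd (m₂ ^ 2) := ⟨a₂ ^ 2 - e * b₂ ^ 2, by linarith⟩
  have hm1 : Odd m₁ := by have := Int.odd_pow.mp ho1; tauto
  have hm2 : Odd m₂ := by have := Int.odd_pow.mp ho2; tauto
  have hev : Even (m₁ * m₂) := ⟨a₁ * a₂ - e * b₁ * b₂, by linarith⟩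
  exact ((Int.not_odd_iff_even.mpr hev)) (hm1.mul hm2)
end

section
/- Let e be a positive integer with e ≡ 1 (mod 4) that has a prime factor p with p ≡ 5 (mod 8) or p ≡ 7 (mod 8). Then there do not exist integers a₁, b₁, m₁, a₂, b₂, m₂ such that 4a₁² + 4a₁b₁ + (1−e)b₁² = 2m₁² − 2, 4a₂² + 4a₂b₂ + (1−e)b₂² = 2m₂² − 2, and 4a₁a₂ + 2a₁b₂ + 2a₂b₁ + (1−e)b₁b₂ = 2m₁m₂ all hold. -/
/-- On a principally polarized abelian surface with `End(X) = ℤ[(1+√e)/2]`, where the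
positive integer `e ≡ 1 (mod 4)` has a prime factor `p ≡ 5` or `7 (mod 8)`, the three
intersection-theoretic equations for two submaximal classes have no integer solution. -/
theorem no_two_submaximal_case2 (e : ℕ) (he : 0 < e) (hmod : e % 4 = 1)
    (hp : ∃ p : ℕ, p.Prime ∧ p ∣ e ∧ (p % 8 = 5 ∨ p % 8 = 7)) :
    ¬ ∃ (a₁ b₁ m₁ a₂ b₂ m₂ : ℤ),
      4 * a₁ ^ 2 + 4 * a₁ * b₁ + (1 - (e : ℤ)) * b₁ ^ 2 = 2 * m₁ ^ 2 - 2 ∧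
      4 * a₂ ^ 2 + 4 * a₂ * b₂ + (1 - (e : ℤ)) * b₂ ^ 2 = 2 * m₂ ^ 2 - 2 ∧
      4 * a₁ * a₂ + 2 * a₁ * b₂ + 2 * a₂ * b₁ + (1 - (e : ℤ)) * b₁ * b₂ = 2 * m₁ * m₂ := by
  rintro ⟨a₁, b₁, m₁, a₂, b₂, m₂, h1, h2, h3⟩
  obtain ⟨p, hpp, hpe, hp57⟩ := hp
  haveI : Fact p.Prime := ⟨hpp⟩
  have hp2 : p ≠ 2 := by rintro rfl; omega
  set E : ℤ := (e : ℤ) with hE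
  set c : ℤ := a₁ * b₂ - a₂ * b₁ with hc
  -- first identity: E * c² = m₁² + m₂² - 1
  have h4 : E * c ^ 2 = m₁ ^ 2 + m₂ ^ 2 - 1 := by
    have key : 4 * (E * c ^ 2) = 4 * (m₁ ^ 2 + m₂ ^ 2 - 1) := by
      linear_combination (4 * a₁ * a₂ + 2 * a₁ * b₂ + 2 * a₂ * b₁ + (1 - E) * b₁ * b₂
          + 2 * m₁ * m₂) * h3
        - (4 * a₂ ^ 2 + 4 * a₂ * b₂ + (1 - E) * b₂ ^ 2) * h1
        - (2 * m₁ ^ 2 - 2) * h2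
    linarith
  set s : ℤ := (2 * a₁ + b₁) * m₂ - (2 * a₂ + b₂) * m₁ with hs
  set t : ℤ := b₁ * m₂ - b₂ * m₁ with ht
  -- second identity: s² + 2 = E * (t² - 2 c²)
  have h5 : s ^ 2 + 2 = E * (t ^ 2 - 2 * c ^ 2) := by
    linear_combination m₂ ^ 2 * h1 + m₁ ^ 2 * h2 - 2 * m₁ * m₂ * h3 + 2 * h4
  have hdvd : (p : ℤ) ∣ s ^ 2 + 2 := by
    rw [h5]
    exact dvd_mul_of_dvd_left (Int.natCast_dvd_natCast.mpr hpe) _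
  have hsq : IsSquare (-2 : ZMod p) := by
    refine ⟨(s : ZMod p), ?_⟩
    have : ((s ^ 2 + 2 : ℤ) : ZMod p) = 0 := by
      exact_mod_cast (ZMod.intCast_zmod_eq_zero_iff_dvd _ _).mpr hdvd
    push_cast at this
    linear_combination -this
  rw [ZMod.exists_sq_eq_neg_two_iff hp2] at hsq
  omega
end

section
/- Let p be an odd prime and let c₁, m₁, c₂, m₂ be elements of the field 𝔽_p = ZMod p satisfying c₁² − 2m₁² = −2, c₂² − 2m₂² = −2, and c₁c₂ − 2m₁m₂ = 0. Then −2 is a square in 𝔽_p. -/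
/-- If `c₁² - 2m₁² = -2`, `c₂² - 2m₂² = -2` and `c₁c₂ - 2m₁m₂ = 0` in `𝔽_p` for an odd
prime `p`, then `-2` is a square in `𝔽_p`. -/
theorem neg_two_is_square_of_relations (p : ℕ) [Fact p.Prime] (hp : p ≠ 2)
    (c₁ m₁ c₂ m₂ : ZMod p)
    (h1 : c₁ ^ 2 - 2 * m₁ ^ 2 = -2)
    (h2 : c₂ ^ 2 - 2 * m₂ ^ 2 = -2)
    (h3 : c₁ * c₂ - 2 * m₁ * m₂ = 0) :
    IsSquare (-2 : ZMod p) := by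
  have two_ne : (2 : ZMod p) ≠ 0 := by
    intro h
    have hd : (p : ℕ) ∣ 2 := by
      have : ((2 : ℕ) : ZMod p) = 0 := by exact_mod_cast h
      exact (ZMod.natCast_eq_zero_iff 2 p).mp this
    exact hp ((Nat.prime_dvd_prime_iff_eq Fact.out Nat.prime_two).mp hd)
  have hk : c₁ ^ 2 * c₂ ^ 2 = 4 * m₁ ^ 2 * m₂ ^ 2 := by
    linear_combination (c₁ * c₂ + 2 * m₁ * m₂) * h3
  have key4 : 4 * m₁ ^ 2 + 4 * m₂ ^ 2 = 4 := by
    linear_combination c₂ ^ 2 * h1 + (2 * m₁ ^ 2 - 2) * h2 - hk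
  have hx : 2 * ((c₁ * m₂ - c₂ * m₁) ^ 2) = 2 * (-2) := by
    linear_combination 2 * m₂ ^ 2 * h1 + 2 * m₁ ^ 2 * h2 - 4 * m₁ * m₂ * h3 - key4
  have hx' : (c₁ * m₂ - c₂ * m₁) ^ 2 = -2 := mul_left_cancel₀ two_ne hx
  exact ⟨c₁ * m₂ - c₂ * m₁, by linear_combination -hx'⟩
end

section
/- Let e ≥ 1 be an integer, p an integer, and q, l, k positive integers such that D := 2q² − 2e·p² > 0 and l² − D·k² = 1, and set λ = p/q (a real number). Then the set { t ∈ ℝ : 2 − 2e·t² > 0 and (k·q·(2 − 2e·λ·t))/l < √(2 − 2e·t²) } is exactly the open interval ( (2e·k²q²·λ − l·√e)/(e·(2k²q² + 1)), (2e·k²q²·λ + l·√e)/(e·(2k²q² + 1)) ). -/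
set_option maxHeartbeats 1000000 in
/-- Interval-borders lemma, Case 1 (`End(X) = ℤ[√e]`): the submaximality interval of the
Pell bound `π_λ(t) = kq(2 - 2eλt)/l`, `λ = p/q`, is the explicit open interval
`((2ek²q²λ - l√e)/(e(2k²q²+1)), (2ek²q²λ + l√e)/(e(2k²q²+1)))`. -/
theorem pell_bound_interval_case1 (e p q l k : ℤ) (he : 1 ≤ e)
    (hq : 0 < q) (hl : 0 < l) (hk : 0 < k)
    (hD : 0 < 2 * q ^ 2 - 2 * e * p ^ 2)
    (hPell : l ^ 2 - (2 * q ^ 2 - 2 * e * p ^ 2) * k ^ 2 = 1) :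
    {t : ℝ | 0 < 2 - 2 * (e : ℝ) * t ^ 2 ∧
        ((k : ℝ) * q * (2 - 2 * (e : ℝ) * ((p : ℝ) / (q : ℝ)) * t)) / (l : ℝ) <
          Real.sqrt (2 - 2 * (e : ℝ) * t ^ 2)} =
      Set.Ioo
        ((2 * (e : ℝ) * (k : ℝ) ^ 2 * (q : ℝ) ^ 2 * ((p : ℝ) / (q : ℝ)) -
            (l : ℝ) * Real.sqrt (e : ℝ)) / ((e : ℝ) * (2 * (k : ℝ) ^ 2 * (q : ℝ) ^ 2 + 1)))
        ((2 * (e : ℝ) * (k : ℝ) ^ 2 * (q : ℝ) ^ 2 * ((p : ℝ) / (q : ℝ)) +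
            (l : ℝ) * Real.sqrt (e : ℝ)) / ((e : ℝ) * (2 * (k : ℝ) ^ 2 * (q : ℝ) ^ 2 + 1))) := by
  have hq' : (0:ℝ) < q := by exact_mod_cast hq
  have hl' : (0:ℝ) < l := by exact_mod_cast hl
  have hk' : (0:ℝ) < k := by exact_mod_cast hk
  have he' : (1:ℝ) ≤ (e:ℝ) := by exact_mod_cast he
  have he0 : (0:ℝ) < (e:ℝ) := by linarith
  have hD' : (0:ℝ) < 2*(q:ℝ)^2 - 2*(e:ℝ)*(p:ℝ)^2 := by exact_mod_cast hD
  have hPell' : (l:ℝ)^2 - (2*(q:ℝ)^2 - 2*(e:ℝ)*(p:ℝ)^2)*(k:ℝ)^2 = 1 := by exact_mod_cast hPell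
  have hq0 : (q:ℝ) ≠ 0 := ne_of_gt hq'
  have hse : Real.sqrt (e:ℝ) ^ 2 = (e:ℝ) := Real.sq_sqrt he0.le
  have hse0 : 0 < Real.sqrt (e:ℝ) := Real.sqrt_pos.mpr he0
  set s := Real.sqrt (e:ℝ) with hs
  ext t
  simp only [Set.mem_setOf_eq, Set.mem_Ioo]
  have hc2 : 2*(e:ℝ)*(k:ℝ)^2*(q:ℝ)^2*((p:ℝ)/(q:ℝ)) = 2*(e:ℝ)*(k:ℝ)^2*(q:ℝ)*(p:ℝ) := by
    field_simp
  have harg : (k:ℝ)*(q:ℝ)*(2 - 2*(e:ℝ)*((p:ℝ)/(q:ℝ))*t) = 2*(k:ℝ)*(q:ℝ) - 2*(e:ℝ)*(k:ℝ)*(p:ℝ)*t := by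
    field_simp
  rw [hc2, harg]
  set A : ℝ := 2*(k:ℝ)*(q:ℝ) - 2*(e:ℝ)*(k:ℝ)*(p:ℝ)*t with hA
  set c : ℝ := 2*(e:ℝ)*(k:ℝ)^2*(q:ℝ)*(p:ℝ) with hc
  set m : ℝ := (e:ℝ)*(2*(k:ℝ)^2*(q:ℝ)^2+1) with hm'
  have hm : (0:ℝ) < m := by rw [hm']; positivity
  have hd : (0:ℝ) < (l:ℝ) * s := by positivity
  -- key polynomial identity (uses Pell)
  have key : ((l:ℝ)*s)^2 - (m*t - c)^2
      = (m/2) * ((l:ℝ)^2*(2 - 2*(e:ℝ)*t^2) - A^2) := by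
    rw [hA, hc, hm', mul_pow, hse]
    linear_combination ((e:ℝ)*(1-(2*(k:ℝ)^2*(q:ℝ)^2+1)*(1-(e:ℝ)*t^2))) * hPell'
  have quad_iff : (0 < 2 - 2*(e:ℝ)*t^2 ∧ A/(l:ℝ) < Real.sqrt (2 - 2*(e:ℝ)*t^2))
      ↔ (m*t - c)^2 < ((l:ℝ)*s)^2 := by
    constructor
    · rintro ⟨h1, h2⟩
      have hA0 : 0 ≤ A := by
        rw [hA]
        by_contra hneg
        push_neg at hneg
        have h3 : (0:ℝ) < (e:ℝ)*(k:ℝ)*(p:ℝ)*t - (k:ℝ)*(q:ℝ) := by linarith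
        have h4 : (0:ℝ) < (e:ℝ)*(k:ℝ)*(p:ℝ)*t + (k:ℝ)*(q:ℝ) := by
          nlinarith [mul_pos hk' hq']
        nlinarith [mul_pos h3 h4, mul_pos hk' hk', mul_pos (mul_pos hk' hk') hD',
          mul_pos he0 (mul_pos (mul_pos hk' hk') h1)]
      have h5 : (A/(l:ℝ))^2 < 2 - 2*(e:ℝ)*t^2 :=
        (Real.lt_sqrt (div_nonneg hA0 hl'.le)).mp h2
      have h6 : A^2 < (l:ℝ)^2 * (2 - 2*(e:ℝ)*t^2) := by
        have h7 : (A/(l:ℝ))^2 = A^2/(l:ℝ)^2 := by ring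
        rw [h7, div_lt_iff₀ (by positivity)] at h5
        linarith
      have hpos : 0 < m/2 * ((l:ℝ)^2*(2 - 2*(e:ℝ)*t^2) - A^2) :=
        mul_pos (by linarith) (by linarith)
      linarith [key]
    · intro h
      have h6 : A^2 < (l:ℝ)^2 * (2 - 2*(e:ℝ)*t^2) := by
        by_contra hcon
        push_neg at hcon
        have hnp : m/2 * ((l:ℝ)^2*(2 - 2*(e:ℝ)*t^2) - A^2) ≤ 0 :=
          mul_nonpos_of_nonneg_of_nonpos (by linarith) (by linarith)
        linarith [key]
      have h1 : 0 < 2 - 2*(e:ℝ)*t^2 := by nlinarith [sq_nonneg A, sq_nonneg (l:ℝ)]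
      refine ⟨h1, ?_⟩
      rcases lt_or_ge A 0 with hA0 | hA0
      · calc A/(l:ℝ) < 0 := div_neg_of_neg_of_pos hA0 hl'
          _ ≤ Real.sqrt (2 - 2*(e:ℝ)*t^2) := Real.sqrt_nonneg _
      · refine (Real.lt_sqrt (div_nonneg hA0 hl'.le)).mpr ?_
        have h7 : (A/(l:ℝ))^2 = A^2/(l:ℝ)^2 := by ring
        rw [h7, div_lt_iff₀ (by positivity)]
        linarith
  have int_iff : ((c - (l:ℝ)*s)/m < t ∧ t < (c + (l:ℝ)*s)/m)
      ↔ (m*t - c)^2 < ((l:ℝ)*s)^2 := by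
    rw [div_lt_iff₀ hm, lt_div_iff₀ hm]
    constructor
    · rintro ⟨h1, h2⟩
      exact sq_lt_sq' (by linarith) (by linarith)
    · intro h
      obtain ⟨h1, h2⟩ := abs_lt_of_sq_lt_sq' h hd.le
      exact ⟨by linarith, by linarith⟩
  rw [quad_iff, ← int_iff]
end

section
/- Let e ≥ 5 be an integer with e ≡ 1 (mod 4), p an integer, and q, l, k positive integers such that D := 2q² + 2pq + ((1−e)/2)·p² > 0 and l² − D·k² = 1, and set λ = p/q (a real number). Then the set { t ∈ ℝ : 2 + 2t + ((1−e)/2)·t² > 0 and (k·q·(2 + λ + t + ((1−e)/2)·λ·t))/l < √(2 + 2t + ((1−e)/2)·t²) } is exactly the open interval ( (2 + 2e·k²q²·λ − 2l·√e)/((e−1) + 2e·k²q²), (2 + 2e·k²q²·λ + 2l·√e)/((e−1) + 2e·k²q²) ). -/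
set_option maxHeartbeats 1000000 in
lemma pell_aux (E P Q L K s t : ℝ) (hE : 5 ≤ E) (hQ : 0 < Q) (hL : 0 < L) (hK : 0 < K)
    (hD : 0 < 2*Q^2 + 2*P*Q + ((1-E)/2)*P^2)
    (hPell : L^2 - (2*Q^2 + 2*P*Q + ((1-E)/2)*P^2)*K^2 = 1)
    (hs0 : 0 < s) (hs2 : s^2 = E) :
    (0 < 2 + 2*t + ((1-E)/2)*t^2 ∧
      (K*Q*(2 + P/Q + t + ((1-E)/2)*(P/Q)*t))/L < Real.sqrt (2 + 2*t + ((1-E)/2)*t^2))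
    ↔ ((2 + 2*E*K^2*Q^2*(P/Q) - 2*L*s)/((E-1) + 2*E*K^2*Q^2) < t ∧
        t < (2 + 2*E*K^2*Q^2*(P/Q) + 2*L*s)/((E-1) + 2*E*K^2*Q^2)) := by
  have hQne : Q ≠ 0 := ne_of_gt hQ
  have hLne : L ≠ 0 := ne_of_gt hL
  have hGeq : K*Q*(2 + P/Q + t + ((1-E)/2)*(P/Q)*t) = K*(2*Q + P + Q*t + ((1-E)/2)*P*t) := by
    field_simp
  have hnum : 2*E*K^2*Q^2*(P/Q) = 2*E*K^2*Q*P := by field_simp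
  rw [hGeq, hnum]
  obtain ⟨F, hF_def⟩ : ∃ F : ℝ, F = 2 + 2*t + ((1-E)/2)*t^2 := ⟨_, rfl⟩
  obtain ⟨G, hG_def⟩ : ∃ G : ℝ, G = 2*Q + P + Q*t + ((1-E)/2)*P*t := ⟨_, rfl⟩
  obtain ⟨A, hA_def⟩ : ∃ A : ℝ, A = (E-1) + 2*E*K^2*Q^2 := ⟨_, rfl⟩
  obtain ⟨X, hX_def⟩ : ∃ X : ℝ, X = A*t - (2 + 2*E*K^2*Q*P) := ⟨_, rfl⟩
  rw [← hF_def, ← hG_def, ← hA_def]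
  have hA : 0 < A := by
    rw [hA_def]
    nlinarith [mul_pos (mul_pos hK hK) (mul_pos hQ hQ)]
  -- key identity (uses the Pell equation)
  have hkey : 2*A*(L^2*F - K^2*G^2) = 4*L^2*E - X^2 := by
    rw [hX_def, hA_def, hF_def, hG_def]
    linear_combination (2*((E-1) + 2*E*K^2*Q^2)*(2 + 2*t + ((1-E)/2)*t^2) - 4*E) * hPell
  have h4 : (2*L*s)^2 = 4*L^2*E := by rw [← hs2]; ring
  have h2ls : 0 < 2*L*s := by positivity
  have hL2pos : (0:ℝ) < L^2 := by positivity
  constructor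
  · rintro ⟨hF, hlt⟩
    have h2QG : 2*Q*G = (2*Q^2 + 2*P*Q + ((1-E)/2)*P^2) + Q^2*F + ((E-1)/2)*(Q*t - P)^2 := by
      rw [hG_def, hF_def]; ring
    have hQG : 0 < Q*G := by
      nlinarith [mul_pos (mul_pos hQ hQ) hF,
        mul_nonneg (by linarith : (0:ℝ) ≤ (E-1)/2) (sq_nonneg (Q*t - P))]
    have hG : 0 < G := by
      rcases mul_pos_iff.mp hQG with ⟨_, h⟩ | ⟨h, _⟩
      · exact h
      · linarith
    have hπ : 0 ≤ K*G/L := by positivity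
    have hsq : (K*G/L)^2 < F := (Real.lt_sqrt hπ).mp hlt
    rw [div_pow, div_lt_iff₀ hL2pos] at hsq
    have hmain : 0 < L^2*F - K^2*G^2 := by
      have hr : (K*G)^2 = K^2*G^2 := by ring
      linarith
    have hX2 : X^2 < (2*L*s)^2 := by linarith [mul_pos hA hmain, h4, hkey]
    obtain ⟨hlow, hupp⟩ := abs_lt_of_sq_lt_sq' hX2 (le_of_lt h2ls)
    rw [hX_def] at hlow hupp
    constructor
    · rw [div_lt_iff₀ hA]; linarith
    · rw [lt_div_iff₀ hA]; linarith
  · rintro ⟨h1, h2⟩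
    rw [div_lt_iff₀ hA] at h1
    rw [lt_div_iff₀ hA] at h2
    have hX2 : X^2 < (2*L*s)^2 := by
      apply sq_lt_sq' <;> rw [hX_def] <;> [linarith; linarith]
    have hAM : 0 < A*(L^2*F - K^2*G^2) := by linarith [hkey, h4, hX2]
    have hmain : 0 < L^2*F - K^2*G^2 := by
      rcases mul_pos_iff.mp hAM with ⟨_, h⟩ | ⟨h, _⟩
      · exact h
      · linarith
    have hF : 0 < F := by
      have hr : (K*G)^2 = K^2*G^2 := by ring
      nlinarith [hmain, sq_nonneg (K*G), hL2pos]
    refine ⟨hF, ?_⟩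
    have h1' : (K*G/L)^2 < F := by
      rw [div_pow, div_lt_iff₀ hL2pos]
      have hr : (K*G)^2 = K^2*G^2 := by ring
      linarith
    calc K*G/L ≤ |K*G/L| := le_abs_self _
      _ = Real.sqrt ((K*G/L)^2) := (Real.sqrt_sq_eq_abs _).symm
      _ < Real.sqrt F := Real.sqrt_lt_sqrt (sq_nonneg _) h1'

/-- Interval-borders lemma, Case 2 (`End(X) = ℤ[(1+√e)/2]`): the submaximality interval of
the Pell bound `π_λ(t) = kq(2 + λ + t + ((1-e)/2)λt)/l`, `λ = p/q`, is the explicit open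
interval `((2 + 2ek²q²λ - 2l√e)/((e-1) + 2ek²q²), (2 + 2ek²q²λ + 2l√e)/((e-1) + 2ek²q²))`. -/
theorem pell_bound_interval_case2 (e p q l k : ℤ) (he : 5 ≤ e) (hmod : e % 4 = 1)
    (hq : 0 < q) (hl : 0 < l) (hk : 0 < k)
    (hD : 0 < 2 * (q : ℝ) ^ 2 + 2 * (p : ℝ) * (q : ℝ) + ((1 - (e : ℝ)) / 2) * (p : ℝ) ^ 2)
    (hPell : (l : ℝ) ^ 2 -
        (2 * (q : ℝ) ^ 2 + 2 * (p : ℝ) * (q : ℝ) + ((1 - (e : ℝ)) / 2) * (p : ℝ) ^ 2) *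
          (k : ℝ) ^ 2 = 1) :
    {t : ℝ | 0 < 2 + 2 * t + ((1 - (e : ℝ)) / 2) * t ^ 2 ∧
        ((k : ℝ) * (q : ℝ) *
            (2 + (p : ℝ) / (q : ℝ) + t + ((1 - (e : ℝ)) / 2) * ((p : ℝ) / (q : ℝ)) * t)) /
            (l : ℝ) <
          Real.sqrt (2 + 2 * t + ((1 - (e : ℝ)) / 2) * t ^ 2)} =
      Set.Ioo
        ((2 + 2 * (e : ℝ) * (k : ℝ) ^ 2 * (q : ℝ) ^ 2 * ((p : ℝ) / (q : ℝ)) -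
            2 * (l : ℝ) * Real.sqrt (e : ℝ)) /
          (((e : ℝ) - 1) + 2 * (e : ℝ) * (k : ℝ) ^ 2 * (q : ℝ) ^ 2))
        ((2 + 2 * (e : ℝ) * (k : ℝ) ^ 2 * (q : ℝ) ^ 2 * ((p : ℝ) / (q : ℝ)) +
            2 * (l : ℝ) * Real.sqrt (e : ℝ)) /
          (((e : ℝ) - 1) + 2 * (e : ℝ) * (k : ℝ) ^ 2 * (q : ℝ) ^ 2)) := by
  have he' : (5:ℝ) ≤ (e:ℝ) := by exact_mod_cast he
  have hq' : (0:ℝ) < (q:ℝ) := by exact_mod_cast hq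
  have hl' : (0:ℝ) < (l:ℝ) := by exact_mod_cast hl
  have hk' : (0:ℝ) < (k:ℝ) := by exact_mod_cast hk
  have hs0 : 0 < Real.sqrt (e:ℝ) := Real.sqrt_pos.mpr (by linarith)
  have hs2 : (Real.sqrt (e:ℝ))^2 = (e:ℝ) := Real.sq_sqrt (by linarith)
  ext t
  simp only [Set.mem_setOf_eq, Set.mem_Ioo]
  exact pell_aux (e:ℝ) (p:ℝ) (q:ℝ) (l:ℝ) (k:ℝ) (Real.sqrt (e:ℝ)) t he' hq' hl' hk'
    (by linarith [hD]) (by linarith [hPell]) hs0 hs2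
end

section
/- Let e ≥ 1 be an integer, p an integer, and q, l, k positive integers such that D := 2q² − 2e·p² > 0 and l² − D·k² = 1. Then (2l·√e)/(e·(2k²q² + 1)) < √2/(q·√e). -/
/-- Interval-length lemma, Case 1 (`End(X) = ℤ[√e]`): the length of the submaximality
interval of a Pell bound is bounded by `√2/(q√e)`. -/
theorem pell_interval_length_case1 (e p q l k : ℤ) (he : 1 ≤ e)
    (hq : 0 < q) (hl : 0 < l) (hk : 0 < k)
    (hD : 0 < 2 * q ^ 2 - 2 * e * p ^ 2)
    (hPell : l ^ 2 - (2 * q ^ 2 - 2 * e * p ^ 2) * k ^ 2 = 1) :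
    (2 * (l : ℝ) * Real.sqrt (e : ℝ)) / ((e : ℝ) * (2 * (k : ℝ) ^ 2 * (q : ℝ) ^ 2 + 1)) <
      Real.sqrt 2 / ((q : ℝ) * Real.sqrt (e : ℝ)) := by
  -- integer key inequality
  have hl2 : l ^ 2 ≤ 2 * q ^ 2 * k ^ 2 + 1 := by
    nlinarith [sq_nonneg p, sq_nonneg k, mul_nonneg (mul_nonneg (by linarith : (0:ℤ) ≤ e)
      (sq_nonneg p)) (sq_nonneg k)]
  have hkey : 2 * l ^ 2 * q ^ 2 < (2 * k ^ 2 * q ^ 2 + 1) ^ 2 := by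
    have hk1 : 1 ≤ k ^ 2 := by nlinarith
    have hq1 : 1 ≤ q ^ 2 := by nlinarith
    nlinarith [mul_le_mul_of_nonneg_right hl2 (sq_nonneg q),
      mul_nonneg (mul_nonneg (sq_nonneg q) (sq_nonneg q)) (mul_nonneg (sq_nonneg k) (by linarith : (0:ℤ) ≤ k ^ 2 - 1)),
      mul_le_mul_of_nonneg_right hk1 (sq_nonneg q)]
  -- move to reals
  have heR : (1:ℝ) ≤ (e:ℝ) := by exact_mod_cast he
  have heR0 : (0:ℝ) < (e:ℝ) := by linarith
  have hqR : (0:ℝ) < (q:ℝ) := by exact_mod_cast hq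
  have hlR : (0:ℝ) < (l:ℝ) := by exact_mod_cast hl
  have hkR : (0:ℝ) < (k:ℝ) := by exact_mod_cast hk
  have hse : (0:ℝ) < Real.sqrt (e:ℝ) := Real.sqrt_pos.mpr heR0
  have hse2 : Real.sqrt (e:ℝ) * Real.sqrt (e:ℝ) = (e:ℝ) := Real.mul_self_sqrt heR0.le
  have h2 : Real.sqrt 2 * Real.sqrt 2 = 2 := Real.mul_self_sqrt (by norm_num)
  have h2p : (0:ℝ) < Real.sqrt 2 := Real.sqrt_pos.mpr (by norm_num)
  have hX : (0:ℝ) < 2 * (k:ℝ) ^ 2 * (q:ℝ) ^ 2 + 1 := by positivity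
  rw [div_lt_div_iff₀ (by positivity) (by positivity)]
  have hkeyR : 2 * (l:ℝ) ^ 2 * (q:ℝ) ^ 2 < (2 * (k:ℝ) ^ 2 * (q:ℝ) ^ 2 + 1) ^ 2 := by
    exact_mod_cast hkey
  -- main step: 2*l*q < √2 * (2k²q² + 1)
  have hmain : 2 * (l:ℝ) * (q:ℝ) < Real.sqrt 2 * (2 * (k:ℝ) ^ 2 * (q:ℝ) ^ 2 + 1) := by
    nlinarith [hkeyR, h2, h2p, mul_pos hlR hqR,
      mul_pos h2p hX, sq_nonneg (Real.sqrt 2 * (2 * (k:ℝ) ^ 2 * (q:ℝ) ^ 2 + 1) - 2 * l * q)]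
  have hEq : 2 * (l:ℝ) * Real.sqrt (e:ℝ) * ((q:ℝ) * Real.sqrt (e:ℝ))
      = 2 * (l:ℝ) * (q:ℝ) * (e:ℝ) := by
    rw [show 2 * (l:ℝ) * Real.sqrt (e:ℝ) * ((q:ℝ) * Real.sqrt (e:ℝ))
        = 2 * (l:ℝ) * (q:ℝ) * (Real.sqrt (e:ℝ) * Real.sqrt (e:ℝ)) by ring, hse2]
  have := mul_lt_mul_of_pos_right hmain heR0
  rw [hEq]
  nlinarith [this]
end

section
/- Let e ≥ 5 be a non-square integer with e ≡ 1 (mod 4), let p be an integer and q a positive integer with gcd(p,q) = 1, and let l, k be positive integers such that D := 2q² + 2pq + ((1−e)/2)·p² > 0 and l² − D·k² = 1. Then (4l·√e)/((e−1) + 2e·k²q²) < √11/(q·√e). -/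
set_option maxHeartbeats 1000000


/-- Interval-length lemma, Case 2 (`End(X) = ℤ[(1+√e)/2]`): the length of the
submaximality interval of a Pell bound is bounded by `√11/(q√e)`. -/
theorem pell_interval_length_case2 (e p q l k : ℤ) (he : 5 ≤ e) (hmod : e % 4 = 1)
    (hns : ¬ IsSquare e) (hq : 0 < q) (hcop : Int.gcd p q = 1) (hl : 0 < l) (hk : 0 < k)
    (hD : 0 < 2 * (q : ℝ) ^ 2 + 2 * (p : ℝ) * (q : ℝ) + ((1 - (e : ℝ)) / 2) * (p : ℝ) ^ 2)
    (hPell : (l : ℝ) ^ 2 -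
        (2 * (q : ℝ) ^ 2 + 2 * (p : ℝ) * (q : ℝ) + ((1 - (e : ℝ)) / 2) * (p : ℝ) ^ 2) *
          (k : ℝ) ^ 2 = 1) :
    (4 * (l : ℝ) * Real.sqrt (e : ℝ)) /
        (((e : ℝ) - 1) + 2 * (e : ℝ) * (k : ℝ) ^ 2 * (q : ℝ) ^ 2) <
      Real.sqrt 11 / ((q : ℝ) * Real.sqrt (e : ℝ)) := by
  have heR : (5:ℝ) ≤ (e:ℝ) := by exact_mod_cast he
  have hqR : (1:ℝ) ≤ (q:ℝ) := by exact_mod_cast hq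
  have hkR : (1:ℝ) ≤ (k:ℝ) := by exact_mod_cast hk
  have hlR : (1:ℝ) ≤ (l:ℝ) := by exact_mod_cast hl
  set se := Real.sqrt (e:ℝ) with hse_def
  set s11 := Real.sqrt 11 with hs11_def
  have hse2 : se ^ 2 = (e:ℝ) := Real.sq_sqrt (by linarith)
  have hs112 : s11 ^ 2 = 11 := Real.sq_sqrt (by norm_num)
  have hse_pos : 0 < se := Real.sqrt_pos.mpr (by linarith)
  have hs11_pos : 0 < s11 := Real.sqrt_pos.mpr (by norm_num)
  have hpos : 0 < 2 * (e:ℝ) * (k:ℝ) ^ 2 * (q:ℝ) ^ 2 := by positivity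
  have hB : 0 < ((e:ℝ) - 1) + 2 * (e:ℝ) * (k:ℝ) ^ 2 * (q:ℝ) ^ 2 := by linarith
  rw [div_lt_div_iff₀ hB (by positivity)]
  -- bound on D
  have hDle : (2 * (q:ℝ) ^ 2 + 2 * (p:ℝ) * (q:ℝ) + ((1 - (e:ℝ)) / 2) * (p:ℝ) ^ 2) *
      ((e:ℝ) - 1) ≤ 2 * (q:ℝ) ^ 2 * (e:ℝ) := by
    nlinarith [sq_nonneg (2 * (q:ℝ) - ((e:ℝ) - 1) * (p:ℝ))]
  have hl2 : (l:ℝ) ^ 2 * ((e:ℝ) - 1) ≤ ((e:ℝ) - 1) + 2 * (e:ℝ) * (k:ℝ) ^ 2 * (q:ℝ) ^ 2 := by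
    nlinarith [sq_nonneg ((k:ℝ)), mul_le_mul_of_nonneg_left hDle (sq_nonneg (k:ℝ))]
  have hk2 : (1:ℝ) ≤ (k:ℝ) ^ 2 := by nlinarith
  have hkq : (q:ℝ) ^ 2 ≤ (k:ℝ) ^ 2 * (q:ℝ) ^ 2 := le_mul_of_one_le_left (sq_nonneg _) hk2
  have h16 : 16 * (e:ℝ)^2 * (q:ℝ)^2 ≤ 16 * (e:ℝ)^2 * ((k:ℝ)^2 * (q:ℝ)^2) :=
    mul_le_mul_of_nonneg_left hkq (by positivity)
  have h2e : 2 * (e:ℝ) * (3*(e:ℝ) - 11) * (q:ℝ)^2 ≤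
      2 * (e:ℝ) * (3*(e:ℝ) - 11) * ((k:ℝ)^2 * (q:ℝ)^2) :=
    mul_le_mul_of_nonneg_left hkq (by nlinarith)
  have h3e : (0:ℝ) ≤ 2 * (e:ℝ) * (3*(e:ℝ) - 11) := by nlinarith
  have hq2e : (0:ℝ) ≤ 2 * (e:ℝ) * (3*(e:ℝ) - 11) * (q:ℝ)^2 := mul_nonneg h3e (sq_nonneg _)
  have h11sq : (16:ℝ) ≤ ((e:ℝ) - 1)^2 := by nlinarith
  have h2 : 16 * (q:ℝ)^2 * (e:ℝ)^2 <
      11 * ((e:ℝ) - 1) * (((e:ℝ) - 1) + 2 * (e:ℝ) * (k:ℝ) ^ 2 * (q:ℝ) ^ 2) := by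
    nlinarith [h16, h2e, hq2e, h11sq]
  have h3 := mul_lt_mul_of_pos_right h2 hB
  have h1 := mul_le_mul_of_nonneg_left hl2
    (by positivity : (0:ℝ) ≤ 16 * (q:ℝ)^2 * (e:ℝ)^2)
  have h4 : 16 * (q:ℝ)^2 * (e:ℝ)^2 * ((l:ℝ)^2 * ((e:ℝ) - 1)) <
      11 * ((e:ℝ) - 1) * (((e:ℝ) - 1) + 2 * (e:ℝ) * (k:ℝ) ^ 2 * (q:ℝ) ^ 2) ^ 2 := by
    calc 16 * (q:ℝ)^2 * (e:ℝ)^2 * ((l:ℝ)^2 * ((e:ℝ) - 1))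
        ≤ 16 * (q:ℝ)^2 * (e:ℝ)^2 * (((e:ℝ) - 1) + 2 * (e:ℝ) * (k:ℝ) ^ 2 * (q:ℝ) ^ 2) := h1
      _ < 11 * ((e:ℝ) - 1) * (((e:ℝ) - 1) + 2 * (e:ℝ) * (k:ℝ) ^ 2 * (q:ℝ) ^ 2) ^ 2 := by
          nlinarith [h3]
  have h4' : (4 * (l:ℝ) * (q:ℝ) * (e:ℝ)) ^ 2 * ((e:ℝ) - 1) <
      11 * (((e:ℝ) - 1) + 2 * (e:ℝ) * (k:ℝ) ^ 2 * (q:ℝ) ^ 2) ^ 2 * ((e:ℝ) - 1) := by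
    nlinarith [h4]
  have key : (4 * (l:ℝ) * (q:ℝ) * (e:ℝ)) ^ 2 <
      11 * (((e:ℝ) - 1) + 2 * (e:ℝ) * (k:ℝ) ^ 2 * (q:ℝ) ^ 2) ^ 2 :=
    lt_of_mul_lt_mul_right h4' (by linarith)
  have hsese : se * se = (e:ℝ) := Real.mul_self_sqrt (by linarith)
  have hLHS : 4 * (l:ℝ) * se * ((q:ℝ) * se) = 4 * (l:ℝ) * (q:ℝ) * (e:ℝ) := by
    rw [show 4 * (l:ℝ) * se * ((q:ℝ) * se) = 4 * (l:ℝ) * (q:ℝ) * (se * se) from by ring,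
      hsese]
  rw [hLHS]
  have hrpos : 0 ≤ s11 * (((e:ℝ) - 1) + 2 * (e:ℝ) * (k:ℝ) ^ 2 * (q:ℝ) ^ 2) := by positivity
  refine lt_of_pow_lt_pow_left₀ 2 hrpos ?_
  calc (4 * (l:ℝ) * (q:ℝ) * (e:ℝ)) ^ 2
      < 11 * (((e:ℝ) - 1) + 2 * (e:ℝ) * (k:ℝ) ^ 2 * (q:ℝ) ^ 2) ^ 2 := key
    _ = (s11 * (((e:ℝ) - 1) + 2 * (e:ℝ) * (k:ℝ) ^ 2 * (q:ℝ) ^ 2)) ^ 2 := by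
        rw [mul_pow, hs112]
end

section
/- Let e be a positive non-square integer and let G be the 2×2 integer matrix [[2,0],[0,−2e]]. Suppose M = [[α,β],[γ,δ]] is a 2×2 integer matrix with Mᵀ·G·M = G and α > 0. Then α² − e·γ² = 1, and either (β, δ) = (e·γ, α) or (β, δ) = (−e·γ, −α). -/
open Matrix

/-- Classification of isometries preserving the ample cone, Case 1 (`End(X) = ℤ[√e]`):
if `MᵀGM = G` for `G = diag(2, -2e)` and the top-left entry `α` of `M` is positive, then
`α² - eγ² = 1` and `(β,δ) = (eγ, α)` or `(β,δ) = (-eγ, -α)`. -/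
theorem isometry_classification_case1 (e : ℤ) (he : 0 < e) (hns : ¬ IsSquare e)
    (α β γ δ : ℤ)
    (hiso : Matrix.transpose (!![α, β; γ, δ] : Matrix (Fin 2) (Fin 2) ℤ) *
        !![2, 0; 0, -2 * e] * !![α, β; γ, δ] = !![2, 0; 0, -2 * e])
    (hα : 0 < α) :
    α ^ 2 - e * γ ^ 2 = 1 ∧ ((β = e * γ ∧ δ = α) ∨ (β = -(e * γ) ∧ δ = -α)) := by
  rw [show (!![α, β; γ, δ] : Matrix (Fin 2) (Fin 2) ℤ)ᵀ = !![α, γ; β, δ] from by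
    ext i j; fin_cases i <;> fin_cases j <;> rfl] at hiso
  rw [Matrix.mul_fin_two, Matrix.mul_fin_two] at hiso
  have h00 := (Matrix.ext_iff.mpr hiso 0 0)
  have h01 := (Matrix.ext_iff.mpr hiso 0 1)
  have h11 := (Matrix.ext_iff.mpr hiso 1 1)
  simp at h00 h01 h11
  have h1 : α ^ 2 - e * γ ^ 2 = 1 := by nlinarith [h00]
  have h2 : α * β = e * γ * δ := by nlinarith [h01]
  have h3 : β ^ 2 - e * δ ^ 2 = -e := by nlinarith [h11]
  have hk : e * (δ ^ 2 - α ^ 2) = 0 := by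
    linear_combination (-(e * δ ^ 2)) * h1 - α ^ 2 * h3 + (α * β + e * γ * δ) * h2
  have hd : δ ^ 2 = α ^ 2 := by
    rcases mul_eq_zero.mp hk with h | h
    · linarith
    · linarith
  refine ⟨h1, ?_⟩
  rcases sq_eq_sq_iff_eq_or_eq_neg.mp hd with h | h
  · exact Or.inl ⟨mul_left_cancel₀ (ne_of_gt hα) (by rw [h2, h]; ring), h⟩
  · exact Or.inr ⟨mul_left_cancel₀ (ne_of_gt hα) (by rw [h2, h]; ring), h⟩
end

section
/- Let e ≥ 5 be a non-square integer with e ≡ 1 (mod 4), set f = (e−1)/4, and let G be the 2×2 integer matrix [[4,2],[2,1−e]]. Suppose M = [[α,β],[γ,δ]] is a 2×2 integer matrix with Mᵀ·G·M = G and α > 0. Then α² + αγ − f·γ² = 1, and either (β, δ) = (f·γ, α + γ) or (β, δ) = (α − f·γ, −α). -/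
open Matrix

/-- Classification of isometries preserving the ample cone, Case 2
(`End(X) = ℤ[(1+√e)/2]`, `e = 4f + 1`): if `MᵀGM = G` for `G = [[4,2],[2,1-e]]` (twice the
Gram matrix) and the top-left entry `α` of `M` is positive, then `α² + αγ - fγ² = 1` and
`(β,δ) = (fγ, α+γ)` or `(β,δ) = (α - fγ, -α)`. -/
theorem isometry_classification_case2 (e f : ℤ) (he : 5 ≤ e) (hf : e = 4 * f + 1)
    (hns : ¬ IsSquare e) (α β γ δ : ℤ)
    (hiso : Matrix.transpose (!![α, β; γ, δ] : Matrix (Fin 2) (Fin 2) ℤ) *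
        !![4, 2; 2, 1 - e] * !![α, β; γ, δ] = !![4, 2; 2, 1 - e])
    (hα : 0 < α) :
    α ^ 2 + α * γ - f * γ ^ 2 = 1 ∧
      ((β = f * γ ∧ δ = α + γ) ∨ (β = α - f * γ ∧ δ = -α)) := by
  subst hf
  have ht : (!![α, β; γ, δ] : Matrix (Fin 2) (Fin 2) ℤ)ᵀ = !![α, γ; β, δ] := by
    ext i j; fin_cases i <;> fin_cases j <;> rfl
  rw [ht, Matrix.mul_fin_two, Matrix.mul_fin_two] at hiso
  have h00 := congrFun (congrFun hiso 0) 0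
  have h01 := congrFun (congrFun hiso 0) 1
  have h11 := congrFun (congrFun hiso 1) 1
  simp only [Matrix.cons_val', Matrix.cons_val_zero, Matrix.cons_val_one, Matrix.head_cons,
    Matrix.empty_val', Matrix.cons_val_fin_one, Matrix.head_fin_const, Matrix.of_apply] at h00 h01 h11
  have hfpos : 1 ≤ f := by omega
  have heq4 : 4 * (α ^ 2 + α * γ - f * γ ^ 2) = 4 := by linear_combination h00
  have heq1 : α ^ 2 + α * γ - f * γ ^ 2 = 1 := by linarith
  -- determinant squared is 1
  have key : ((α * δ - β * γ) ^ 2 - 1) * (16 * f + 4) = 0 := by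
    linear_combination
      ((4 * α * β + 2 * α * δ + 2 * β * γ - 4 * f * γ * δ) + 2) * h01
        - (4 * β ^ 2 + 4 * β * δ - 4 * f * δ ^ 2) * h00 - 4 * h11
  have hd2 : (α * δ - β * γ) ^ 2 = 1 := by
    rcases mul_eq_zero.mp key with h | h
    · linarith
    · omega
  have hcases : α * δ - β * γ = 1 ∨ α * δ - β * γ = -1 := by
    rcases mul_eq_zero.mp (show (α * δ - β * γ - 1) * (α * δ - β * γ + 1) = 0 by
      linear_combination hd2) with h | h
    · left; omega
    · right; omega
  refine ⟨heq1, ?_⟩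
  rcases hcases with hd | hd
  · left
    have hb : 4 * β = 4 * (f * γ) := by
      linear_combination α * h01 - (2 * α - 4 * f * γ) * hd - 4 * β * heq1
    have hdl : 4 * δ = 4 * (α + γ) := by
      linear_combination γ * h01 + (4 * α + 2 * γ) * hd - 4 * δ * heq1
    exact ⟨by linarith, by linarith⟩
  · right
    have hb : 4 * β = 4 * (α - f * γ) := by
      linear_combination α * h01 - (2 * α - 4 * f * γ) * hd - 4 * β * heq1
    have hdl : 4 * δ = 4 * (-α) := by
      linear_combination γ * h01 + (4 * α + 2 * γ) * hd - 4 * δ * heq1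
    exact ⟨by linarith, by linarith⟩
end

section
/- Let e be a positive non-square integer with e ≡ 1 (mod 4). Then the following are equivalent: (i) no prime factor p of e satisfies p ≡ 5 (mod 8) or p ≡ 7 (mod 8); (ii) there exist natural numbers A and B with gcd(A, B) = 1 and e = A² + 8B². -/
/-- `QQ n`: `-2` is a square modulo `n` (phrased with integers). -/
def QQ (n : ℕ) : Prop := ∃ c : ℤ, (n : ℤ) ∣ c ^ 2 + 2

lemma QQ_one : QQ 1 := ⟨0, by norm_num⟩

lemma dvd_sq_add_two_of_congr {M c c₁ : ℤ} (h1 : M ∣ c - c₁) (h2 : M ∣ c₁ ^ 2 + 2) :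
    M ∣ c ^ 2 + 2 := by
  have h : c ^ 2 + 2 = (c - c₁) * (c + c₁) + (c₁ ^ 2 + 2) := by ring
  rw [h]; exact dvd_add (h1.mul_right _) h2

/-- CRT step. -/
lemma QQ_mul {m n : ℕ} (h : Nat.Coprime m n) (hm : QQ m) (hn : QQ n) : QQ (m * n) := by
  obtain ⟨c₁, hc₁⟩ := hm
  obtain ⟨c₂, hc₂⟩ := hn
  have hco : IsCoprime (m : ℤ) (n : ℤ) := Nat.isCoprime_iff_coprime.mpr h
  obtain ⟨u, v, huv⟩ := hco
  refine ⟨c₂ * u * m + c₁ * v * n, ?_⟩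
  push_cast
  refine (Nat.isCoprime_iff_coprime.mpr h).mul_dvd ?_ ?_
  · refine dvd_sq_add_two_of_congr ⟨(c₂ - c₁) * u, ?_⟩ hc₁
    linear_combination c₁ * huv
  · refine dvd_sq_add_two_of_congr (c₁ := c₂) ⟨(c₁ - c₂) * v, ?_⟩ hc₂
    linear_combination c₂ * huv

/-- Hensel lifting for odd primes. -/
lemma QQ_prime_pow {p : ℕ} (hp : p.Prime) (hp2 : p ≠ 2) (h : QQ p) (k : ℕ) : QQ (p ^ k) := by
  induction k with
  | zero => simpa using QQ_one
  | succ k ih =>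
    rcases Nat.eq_zero_or_pos k with rfl | hk
    · simpa using h
    obtain ⟨c, hcd⟩ := ih
    obtain ⟨w, hw⟩ : ∃ w : ℤ, c ^ 2 + 2 = (p : ℤ) ^ k * w := by
      obtain ⟨w, hw⟩ := hcd; exact ⟨w, by push_cast at hw ⊢; linarith⟩
    have hppZ : Prime (p : ℤ) := Nat.prime_iff_prime_int.mp hp
    have hpc : ¬ (p : ℤ) ∣ c := by
      intro hdvd
      have h1 : (p : ℤ) ∣ c ^ 2 + 2 := (dvd_pow_self (p:ℤ) hk.ne').trans ⟨w, hw⟩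
      have h2 : (p : ℤ) ∣ (2 : ℤ) := by
        have hsq : (p : ℤ) ∣ c ^ 2 := by rw [pow_two]; exact hdvd.mul_right c
        simpa using dvd_sub h1 hsq
      have : p ∣ 2 := Int.ofNat_dvd.mp (by exact_mod_cast h2)
      exact hp2 ((Nat.prime_dvd_prime_iff_eq hp Nat.prime_two).mp this)
    have hcop : IsCoprime (2 * c) (p : ℤ) := by
      refine IsCoprime.symm ((hppZ.coprime_iff_not_dvd).mpr ?_)
      intro hdvd
      rcases (Int.Prime.dvd_mul' hp hdvd) with h2 | hc'
      · have : p ∣ 2 := Int.ofNat_dvd.mp (by exact_mod_cast h2)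
        exact hp2 ((Nat.prime_dvd_prime_iff_eq hp Nat.prime_two).mp this)
      · exact hpc hc'
    obtain ⟨x, y, hxy⟩ := hcop
    refine ⟨c + (-(w * x)) * p ^ k, ?_⟩
    have key : (c + (-(w * x)) * (p:ℤ) ^ k) ^ 2 + 2
        = (p:ℤ) ^ k * (w * y * p) + (w * x) ^ 2 * ((p:ℤ) ^ k) ^ 2 := by
      linear_combination hw - (p:ℤ) ^ k * w * hxy
    rw [show ((p ^ (k+1) : ℕ) : ℤ) = (p:ℤ) ^ (k+1) by push_cast; ring, key]
    refine dvd_add ⟨w * y, by ring⟩ (Dvd.dvd.mul_left ?_ _)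
    rw [← pow_mul]
    exact pow_dvd_pow _ (by omega)

/-- Descent/peeling lemma: if `N*M` is properly represented by `x² + 2y²` and every
prime factor of `M` is properly represented, then `N` is properly represented. -/
lemma peel : ∀ M N : ℕ, ∀ a b : ℤ, IsCoprime a b → (N : ℤ) * M = a ^ 2 + 2 * b ^ 2 →
    (∀ q : ℕ, q.Prime → q ∣ M → ∃ u v : ℤ, IsCoprime u v ∧ (q : ℤ) = u ^ 2 + 2 * v ^ 2) →
    ∃ s t : ℤ, IsCoprime s t ∧ (N : ℤ) = s ^ 2 + 2 * t ^ 2 := by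
  intro M
  induction M using Nat.strong_induction_on with
  | _ M ih =>
    intro N a b hab hNM hprimes
    rcases eq_or_ne M 0 with rfl | hM0
    · -- a² + 2b² = 0 contradicts coprimality
      exfalso
      have h0 : a ^ 2 + 2 * b ^ 2 = 0 := by simpa using hNM.symm
      have ha2 : a ^ 2 = 0 := by nlinarith [sq_nonneg a, sq_nonneg b]
      have hb2 : b ^ 2 = 0 := by nlinarith [sq_nonneg a, sq_nonneg b]
      have ha : a = 0 := by
        exact (pow_eq_zero_iff two_ne_zero).mp ha2
      have hb : b = 0 := by
        exact (pow_eq_zero_iff two_ne_zero).mp hb2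
      obtain ⟨x, y, hxy⟩ := hab
      rw [ha, hb] at hxy; simp at hxy
    rcases eq_or_ne M 1 with rfl | hM1
    · exact ⟨a, b, hab, by simpa using hNM⟩
    -- pick a prime factor q of M
    set q := M.minFac with hq
    have hqp : q.Prime := Nat.minFac_prime hM1
    have hqd : q ∣ M := Nat.minFac_dvd M
    obtain ⟨M₁, hM₁⟩ := hqd
    obtain ⟨u, v, huv, hqrep⟩ := hprimes q hqp (Dvd.intro _ hM₁.symm)
    have hqZ : Prime (q : ℤ) := Nat.prime_iff_prime_int.mp hqp
    have hq0 : (q : ℤ) ≠ 0 := by exact_mod_cast hqp.ne_zero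
    -- q divides (a*v - b*u)*(a*v + b*u)
    have hdvdNM : (q : ℤ) ∣ (N : ℤ) * M := by
      refine Dvd.dvd.mul_left ?_ _
      exact_mod_cast Int.natCast_dvd_natCast.mpr (Nat.minFac_dvd M)
    have hprod : (q : ℤ) ∣ (a * v - b * u) * (a * v + b * u) := by
      have h1 : (a * v - b * u) * (a * v + b * u)
          = v ^ 2 * ((N : ℤ) * M) - b ^ 2 * (q : ℤ) := by
        rw [hNM, hqrep]; ring
      rw [h1]
      exact dvd_sub (hdvdNM.mul_left _) (Dvd.intro_left _ rfl)
    -- wlog q ∣ a*v - b*u  (else flip the sign of u)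
    obtain ⟨u, v, huv, hqrep, hqdvd⟩ :
        ∃ u v : ℤ, IsCoprime u v ∧ (q : ℤ) = u ^ 2 + 2 * v ^ 2 ∧ (q:ℤ) ∣ a * v - b * u := by
      rcases hqZ.dvd_mul.mp hprod with hc | hc
      · exact ⟨u, v, huv, hqrep, hc⟩
      · exact ⟨-u, v, huv.neg_left, by rw [hqrep]; ring, by simpa [sub_neg_eq_add] using hc⟩
    obtain ⟨t, ht⟩ := hqdvd
    have hsq : (q : ℤ) ∣ a * u + 2 * b * v := by
      have h2 : (a * u + 2 * b * v) ^ 2 = ((N : ℤ) * M) * q - 2 * ((q:ℤ) * t) ^ 2 := by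
        linear_combination (-(q:ℤ)) * hNM - (a ^ 2 + 2 * b ^ 2) * hqrep
          - 2 * (a * v - b * u + (q:ℤ) * t) * ht
      refine hqZ.dvd_of_dvd_pow (n := 2) ?_
      rw [h2]
      exact dvd_sub (Dvd.intro_left _ rfl) ⟨2 * (q:ℤ) * t ^ 2, by ring⟩
    obtain ⟨s, hs⟩ := hsq
    -- descent identities
    have ha2 : a = s * u + 2 * t * v := by
      have hmain : (q : ℤ) * a = (q : ℤ) * (s * u + 2 * t * v) := by
        linear_combination u * hs + 2 * v * ht + a * hqrep
      exact mul_left_cancel₀ hq0 hmain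
    have hb2 : b = s * v - t * u := by
      have hmain : (q : ℤ) * b = (q : ℤ) * (s * v - t * u) := by
        linear_combination v * hs - u * ht + b * hqrep
      exact mul_left_cancel₀ hq0 hmain
    have hst : IsCoprime s t := by
      obtain ⟨x, y, hxy⟩ := hab
      exact ⟨x * u + y * v, 2 * x * v - y * u, by linear_combination hxy - x * ha2 - y * hb2⟩
    -- N * M₁ = s² + 2t²
    have hNM₁ : (N : ℤ) * M₁ = s ^ 2 + 2 * t ^ 2 := by
      have hMcast : (M : ℤ) = (q : ℤ) * M₁ := by exact_mod_cast congrArg (Nat.cast : ℕ → ℤ) hM₁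
      have hexp : (N : ℤ) * (M₁ : ℤ) * (q:ℤ) ^ 2 = ((q:ℤ) * s) ^ 2 + 2 * ((q:ℤ) * t) ^ 2 := by
        rw [← hs, ← ht]
        linear_combination (-(N:ℤ) * (q:ℤ)) * hMcast + (q:ℤ) * hNM + (a ^ 2 + 2 * b ^ 2) * hqrep
      have hexp2 : (N : ℤ) * (M₁ : ℤ) * (q:ℤ) ^ 2 = (s ^ 2 + 2 * t ^ 2) * (q:ℤ) ^ 2 := by
        rw [hexp]; ring
      exact mul_right_cancel₀ (pow_ne_zero 2 hq0) hexp2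
    -- recurse
    have hM₁lt : M₁ < M := by
      have hq2 : 2 ≤ q := hqp.two_le
      rcases Nat.eq_zero_or_pos M₁ with rfl | h1
      · omega
      · calc M₁ < q * M₁ := by nlinarith
          _ = M := hM₁.symm
    exact ih M₁ hM₁lt N s t hst hNM₁
      (fun r hr hrd => hprimes r hr (hrd.trans ⟨q, by rw [hM₁]; ring⟩))

/-- Every odd `n` with `-2` a square mod `n` is properly represented by `x² + 2y²`. -/
lemma proper_rep : ∀ n : ℕ, Odd n → QQ n → ∃ a b : ℤ, IsCoprime a b ∧ (n : ℤ) = a ^ 2 + 2 * b ^ 2 := by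
  intro n
  induction n using Nat.strong_induction_on with
  | _ n ihn =>
    intro hodd hQ
    rcases lt_or_ge n 3 with hn3 | hn3
    · interval_cases n
      · exact absurd hodd (by simp)
      · exact ⟨1, 0, isCoprime_one_left, by norm_num⟩
      · exact absurd hodd (by simp [Nat.odd_iff])
    obtain ⟨c, hc⟩ := hQ
    have hnpos : (0 : ℤ) < n := by exact_mod_cast (by omega : 0 < n)
    set r := c % (n : ℤ) with hr
    have hr0 : 0 ≤ r := Int.emod_nonneg c hnpos.ne'
    have hrn : r < n := Int.emod_lt_of_pos c hnpos
    have hdr : (n : ℤ) ∣ r - c := by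
      rw [hr, Int.emod_def]; exact ⟨-(c / n), by ring⟩
    have hcr : (n : ℤ) ∣ r ^ 2 + 2 := dvd_sq_add_two_of_congr hdr hc
    have hnoddZ : Odd (n : ℤ) := by exact_mod_cast hodd
    -- choose an odd c' with |c'| ≤ n - 1 and n ∣ c'² + 2
    obtain ⟨c', hc'odd, hc'dvd, hc'bd⟩ :
        ∃ c' : ℤ, Odd c' ∧ (n : ℤ) ∣ c' ^ 2 + 2 ∧ c' ^ 2 ≤ ((n : ℤ) - 1) ^ 2 := by
      rcases Int.even_or_odd r with her | hor
      · -- r even: take r - n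
        have hrne : r ≠ 0 := by
          intro h0
          rw [h0] at hcr
          have : (n : ℤ) ∣ 2 := by simpa using hcr
          have h2 : n ∣ 2 := Int.ofNat_dvd.mp (by exact_mod_cast this)
          have := Nat.le_of_dvd (by norm_num) h2
          omega
        refine ⟨r - n, her.sub_odd hnoddZ, dvd_sq_add_two_of_congr ⟨-1, by ring⟩ hcr, ?_⟩
        have h2r : 2 ≤ r := by
          rcases her with ⟨j, hj⟩; omega
        nlinarith
      · exact ⟨r, hor, hcr, by nlinarith⟩
    obtain ⟨d, hd⟩ := hc'dvd
    have hdpos : 0 < d := by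
      rcases lt_trichotomy d 0 with h | h | h
      · nlinarith [sq_nonneg c']
      · rw [h] at hd; nlinarith [sq_nonneg c']
      · exact h
    have hdlt : d < n := by nlinarith
    set m := d.toNat with hm
    have hmd : (m : ℤ) = d := Int.toNat_of_nonneg hdpos.le
    have hc'odd2 : Odd (c' ^ 2 + 2) := by
      rcases hc'odd with ⟨j, hj⟩
      exact ⟨2 * j ^ 2 + 2 * j + 1, by rw [hj]; ring⟩
    -- apply the peeling lemma
    refine peel m n c' 1 isCoprime_one_right (by rw [hmd, ← hd]; ring) ?_
    intro qq hqq hqqd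
    have hqqm : (qq : ℤ) ∣ c' ^ 2 + 2 := by
      rw [hd, ← hmd]
      exact Dvd.dvd.mul_left (Int.natCast_dvd_natCast.mpr hqqd) _
    have hqodd : Odd qq := by
      rcases hqq.eq_two_or_odd' with rfl | h
      · exfalso
        have : (2 : ℤ) ∣ c' ^ 2 + 2 := by exact_mod_cast hqqm
        rcases hc'odd2 with ⟨j, hj⟩
        omega
      · exact h
    have hqlt : qq < n := by
      have : qq ≤ m := Nat.le_of_dvd (by omega) hqqd
      omega
    obtain ⟨u, v, huv, hrep⟩ := ihn qq hqlt hqodd ⟨c', hqqm⟩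
    exact ⟨u, v, huv, hrep⟩


/-- `-2` is a square mod a prime `p ≡ 1, 3 (mod 8)`. -/
lemma QQ_prime {p : ℕ} (hp : p.Prime) (h : p % 8 = 1 ∨ p % 8 = 3) : QQ p := by
  have hp2 : p ≠ 2 := by rintro rfl; omega
  haveI : Fact p.Prime := ⟨hp⟩
  have hs : IsSquare (-2 : ZMod p) := (ZMod.exists_sq_eq_neg_two_iff hp2).mpr h
  obtain ⟨x, hx⟩ := hs
  refine ⟨(x.val : ℤ), ?_⟩
  have hcast : ((x.val : ℤ) ^ 2 + 2 : ℤ) = ((x.val ^ 2 + 2 : ℕ) : ℤ) := by push_cast; ring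
  rw [hcast, Int.natCast_dvd_natCast, ← ZMod.natCast_eq_zero_iff]
  push_cast
  rw [ZMod.natCast_val, ZMod.cast_id]
  rw [pow_two, ← hx]
  ring

lemma QQ_of_primes : ∀ n : ℕ, Odd n →
    (∀ p : ℕ, p.Prime → p ∣ n → p % 8 = 1 ∨ p % 8 = 3) → QQ n := by
  intro n
  induction n using Nat.recOnPosPrimePosCoprime with
  | prime_pow p k hp hk =>
    intro hodd hprimes
    have hpd : p ∣ p ^ k := dvd_pow_self p hk.ne'
    have h13 := hprimes p hp hpd
    have hp2 : p ≠ 2 := by rintro rfl; omega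
    exact QQ_prime_pow hp hp2 (QQ_prime hp h13) k
  | zero => intro hodd; exact absurd hodd (by simp)
  | one => intro _ _; exact QQ_one
  | coprime a b ha hb hab iha ihb =>
    intro hodd hprimes
    rw [Nat.odd_mul] at hodd
    exact QQ_mul hab
      (iha hodd.1 (fun p hp hpd => hprimes p hp (hpd.mul_right b)))
      (ihb hodd.2 (fun p hp hpd => hprimes p hp (hpd.mul_left a)))


/-- For a positive non-square integer `e ≡ 1 (mod 4)`: no prime factor of `e` is
`≡ 5` or `7 (mod 8)` if and only if `e = A² + 8B²` with coprime natural numbers `A, B`. -/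
theorem no_bad_prime_iff_representation (e : ℕ) (he : 0 < e) (hns : ¬ IsSquare e)
    (hmod : e % 4 = 1) :
    (∀ p : ℕ, p.Prime → p ∣ e → ¬ (p % 8 = 5 ∨ p % 8 = 7)) ↔
      ∃ A B : ℕ, Nat.gcd A B = 1 ∧ e = A ^ 2 + 8 * B ^ 2 := by
  have he2 : e % 2 = 1 := by omega
  have heodd : Odd e := Nat.odd_iff.mpr he2
  constructor
  · intro h
    -- all prime factors are ≡ 1 or 3 (mod 8)
    have hprimes : ∀ p : ℕ, p.Prime → p ∣ e → p % 8 = 1 ∨ p % 8 = 3 := by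
      intro p hp hpe
      have hp2 : p ≠ 2 := by
        rintro rfl
        obtain ⟨k, hk⟩ := hpe
        omega
      have hpodd : p % 2 = 1 := Nat.odd_iff.mp (hp.odd_of_ne_two hp2)
      have h8 : p % 8 % 2 = p % 2 := Nat.mod_mod_of_dvd p (by norm_num)
      have hbad := h p hp hpe
      have hlt : p % 8 < 8 := Nat.mod_lt _ (by norm_num)
      omega
    obtain ⟨a, b, hab, heq⟩ := proper_rep e heodd (QQ_of_primes e heodd hprimes)
    -- a is odd
    have heZodd : Odd (e : ℤ) := by exact_mod_cast heodd
    have haodd : Odd a := by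
      rcases Int.even_or_odd a with hea | hoa
      · exfalso
        obtain ⟨j, hj⟩ := hea
        exact (Int.not_odd_iff_even.mpr ⟨2 * j ^ 2 + b ^ 2, by rw [heq, hj]; ring⟩) heZodd
      · exact hoa
    -- b is even
    obtain ⟨k, hk⟩ := haodd
    have hm4 : (e : ℤ) % 4 = 1 := by omega
    have hbeven : Even b := by
      have h4 : (4 : ℤ) ∣ 2 * b ^ 2 := by
        have hrw : 2 * b ^ 2 = ((e : ℤ) - 1) - 4 * (k ^ 2 + k) := by
          rw [heq, hk]; ring
        rw [hrw]
        exact dvd_sub (by omega) ⟨k ^ 2 + k, rfl⟩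
      obtain ⟨w, hw⟩ := h4
      have hb2 : b ^ 2 = 2 * w := by linarith
      have : Even (b ^ 2) := ⟨w, by omega⟩
      exact (Int.even_pow.mp this).1
    obtain ⟨b', hb'⟩ := hbeven
    have hbb : b = 2 * b' := by omega
    refine ⟨a.natAbs, b'.natAbs, ?_, ?_⟩
    · have hco : IsCoprime a b' := by
        rw [hbb] at hab
        exact hab.of_mul_right_right
      exact Int.isCoprime_iff_gcd_eq_one.mp hco
    · have hZ : (e : ℤ) = (a.natAbs : ℤ) ^ 2 + 8 * (b'.natAbs : ℤ) ^ 2 := by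
        rw [heq, hbb]
        rw [Nat.cast_natAbs, Nat.cast_natAbs]
        push_cast
        rw [sq_abs, sq_abs]
        ring
      exact_mod_cast hZ
  · rintro ⟨A, B, hg, heq⟩ p hp hpe hbad
    have hp2 : p ≠ 2 := by
      rintro rfl
      obtain ⟨k, hk⟩ := hpe
      omega
    haveI : Fact p.Prime := ⟨hp⟩
    -- A² + 8B² = 0 in ZMod p
    have h0 : ((A : ZMod p)) ^ 2 + 8 * (B : ZMod p) ^ 2 = 0 := by
      have h1 : ((e : ℕ) : ZMod p) = 0 := (ZMod.natCast_eq_zero_iff _ _).mpr hpe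
      rw [heq] at h1
      push_cast at h1
      exact h1
    have hB : (B : ZMod p) ≠ 0 := by
      intro hB0
      have hA0 : (A : ZMod p) = 0 := by
        rw [hB0] at h0
        have : ((A : ZMod p)) ^ 2 = 0 := by linear_combination h0
        exact pow_eq_zero_iff two_ne_zero |>.mp this
      have hpA : p ∣ A := (ZMod.natCast_eq_zero_iff _ _).mp hA0
      have hpB : p ∣ B := (ZMod.natCast_eq_zero_iff _ _).mp hB0
      have : p ∣ 1 := hg ▸ Nat.dvd_gcd hpA hpB
      exact hp.one_lt.ne' (Nat.dvd_one.mp this)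
    have h2 : (2 : ZMod p) ≠ 0 := by
      intro h20
      have : ((2 : ℕ) : ZMod p) = 0 := by push_cast; exact h20
      have hpd : p ∣ 2 := (ZMod.natCast_eq_zero_iff _ _).mp this
      exact hp2 ((Nat.prime_dvd_prime_iff_eq hp Nat.prime_two).mp hpd)
    have hne : (2 * (B : ZMod p)) ≠ 0 := mul_ne_zero h2 hB
    have hsq : IsSquare (-2 : ZMod p) := by
      refine ⟨(A : ZMod p) * (2 * (B : ZMod p))⁻¹, ?_⟩
      rw [eq_comm]
      field_simp
      linear_combination h0
    have := (ZMod.exists_sq_eq_neg_two_iff hp2).mp hsq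
    omega
end

section
/- For every integer n ≥ 2, setting t = 2/(4n−1), both of the following strict inequalities hold: 2n·(2 + 1/(2n) + t − 2n·t)/(2n+1) < √(2 + 2t − 4n²·t²), and 2 + 1/(2n−1) + t − 4n²·t/(2n−1) < √(2 + 2t − 4n²·t²). -/
/-- On a surface with `End(X) = ℤ[(1+√e)/2]`, `e = 1 + 8n²`, the two Pell bounds
`π_{1/(2n)}` and `π_{1/(2n-1)}` are both submaximal at `t = 2/(4n-1)`, i.e. strictly
below the general upper bound `√(L_t²) = √(2 + 2t - 4n²t²)`. -/
theorem two_pell_bounds_submaximal (n : ℕ) (hn : 2 ≤ n) (t : ℝ)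
    (ht : t = 2 / (4 * (n : ℝ) - 1)) :
    2 * (n : ℝ) * (2 + 1 / (2 * (n : ℝ)) + t - 2 * (n : ℝ) * t) / (2 * (n : ℝ) + 1) <
      Real.sqrt (2 + 2 * t - 4 * (n : ℝ) ^ 2 * t ^ 2) ∧
    2 + 1 / (2 * (n : ℝ) - 1) + t - 4 * (n : ℝ) ^ 2 * t / (2 * (n : ℝ) - 1) <
      Real.sqrt (2 + 2 * t - 4 * (n : ℝ) ^ 2 * t ^ 2) := by
  have hx : (2:ℝ) ≤ (n : ℝ) := by exact_mod_cast hn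
  have h1 : (0:ℝ) < 4 * (n : ℝ) - 1 := by linarith
  have h2 : (0:ℝ) < 2 * (n : ℝ) := by linarith
  have h3 : (0:ℝ) < 2 * (n : ℝ) + 1 := by linarith
  have h4 : (0:ℝ) < 2 * (n : ℝ) - 1 := by linarith
  subst ht
  have e1 : 2 * (n : ℝ) * (2 + 1 / (2 * (n : ℝ)) + 2 / (4 * (n : ℝ) - 1)
      - 2 * (n : ℝ) * (2 / (4 * (n : ℝ) - 1))) / (2 * (n : ℝ) + 1)
      = (8 * (n : ℝ) ^ 2 + 4 * (n : ℝ) - 1) / ((4 * (n : ℝ) - 1) * (2 * (n : ℝ) + 1)) := by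
    have : (n : ℝ) * 4 - 1 ≠ 0 := by linarith
    field_simp
    ring
  have e2 : 2 + 1 / (2 * (n : ℝ) - 1) + 2 / (4 * (n : ℝ) - 1)
      - 4 * (n : ℝ) ^ 2 * (2 / (4 * (n : ℝ) - 1)) / (2 * (n : ℝ) - 1)
      = (8 * (n : ℝ) ^ 2 - 4 * (n : ℝ) - 1) / ((2 * (n : ℝ) - 1) * (4 * (n : ℝ) - 1)) := by
    have : (n : ℝ) * 4 - 1 ≠ 0 := by linarith
    field_simp
    ring
  have e3 : 2 + 2 * (2 / (4 * (n : ℝ) - 1)) - 4 * (n : ℝ) ^ 2 * (2 / (4 * (n : ℝ) - 1)) ^ 2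
      = (16 * (n : ℝ) ^ 2 - 2) / (4 * (n : ℝ) - 1) ^ 2 := by
    field_simp
    ring
  rw [e1, e2, e3]
  have key1 : (8 * (n : ℝ) ^ 2 + 4 * (n : ℝ) - 1) ^ 2
      < (16 * (n : ℝ) ^ 2 - 2) * (2 * (n : ℝ) + 1) ^ 2 := by nlinarith [sq_nonneg (n:ℝ)]
  have key2 : (8 * (n : ℝ) ^ 2 - 4 * (n : ℝ) - 1) ^ 2
      < (16 * (n : ℝ) ^ 2 - 2) * (2 * (n : ℝ) - 1) ^ 2 := by nlinarith [sq_nonneg (n:ℝ)]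
  constructor
  · rw [Real.lt_sqrt (div_nonneg (by nlinarith) (by positivity))]
    rw [div_pow, div_lt_div_iff₀ (by positivity) (by positivity)]
    have h := mul_lt_mul_of_pos_right key1 (pow_pos h1 2)
    refine lt_of_le_of_lt (le_of_eq ?_) (lt_of_lt_of_le h (le_of_eq ?_)) <;> ring
  · rw [Real.lt_sqrt (div_nonneg (by nlinarith) (by positivity))]
    rw [div_pow, div_lt_div_iff₀ (by positivity) (by positivity)]
    have h := mul_lt_mul_of_pos_right key2 (pow_pos h1 2)
    refine lt_of_le_of_lt (le_of_eq ?_) (lt_of_lt_of_le h (le_of_eq ?_)) <;> ring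
end

section
/- Let e be a positive non-square integer, let G be the 2×2 integer matrix [[2,0],[0,−2e]], and let (α₀, β₀) be the fundamental solution of x² − e·y² = 1 (i.e., α₀, β₀ are positive integers with α₀² − e·β₀² = 1, and every pair of positive integers (α, β) with α² − e·β² = 1 satisfies α₀ ≤ α). Set Φ₀ = [[α₀, e·β₀],[β₀, α₀]] and T = [[1,0],[0,−1]]. Then every 2×2 integer matrix M with Mᵀ·G·M = G and M₁₁ > 0 lies in the subgroup of GL₂(ℤ) generated by Φ₀ and T; more precisely, there exists k ∈ ℤ such that M = Φ₀ᵏ or M = Φ₀ᵏ·T (note Φ₀ has determinant 1, hence is invertible over ℤ). -/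
open Matrix Pell Pell.Solution₁

/-- Map a Pell solution to a unit of the 2×2 integer matrix ring. -/
def pellToUnit {e : ℤ} (s : Pell.Solution₁ e) : (Matrix (Fin 2) (Fin 2) ℤ)ˣ where
  val := !![s.x, e * s.y; s.y, s.x]
  inv := !![s.x, -(e * s.y); -s.y, s.x]
  val_inv := by
    ext i j
    fin_cases i <;> fin_cases j <;>
      simp [Matrix.mul_apply, Fin.sum_univ_two] <;>
      first
        | ring1
        | linear_combination s.prop
        | linear_combination -s.prop
        | linear_combination 2 * s.prop
        | linear_combination -2 * s.prop
  inv_val := by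
    ext i j
    fin_cases i <;> fin_cases j <;>
      simp [Matrix.mul_apply, Fin.sum_univ_two] <;>
      first
        | ring1
        | linear_combination s.prop
        | linear_combination -s.prop
        | linear_combination 2 * s.prop
        | linear_combination -2 * s.prop

@[simp] theorem pellToUnit_val {e : ℤ} (s : Pell.Solution₁ e) :
    ((pellToUnit s : (Matrix (Fin 2) (Fin 2) ℤ)ˣ) : Matrix (Fin 2) (Fin 2) ℤ) =
      !![s.x, e * s.y; s.y, s.x] := rfl

/-- The above map as a monoid hom. -/
def pellToUnitsHom (e : ℤ) : Pell.Solution₁ e →* (Matrix (Fin 2) (Fin 2) ℤ)ˣ where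
  toFun := pellToUnit
  map_one' := by
    apply Units.ext
    rw [pellToUnit_val, Units.val_one, Matrix.one_fin_two]
    norm_num
  map_mul' a b := by
    apply Units.ext
    rw [Units.val_mul, pellToUnit_val, pellToUnit_val, pellToUnit_val,
      Matrix.mul_fin_two, Pell.Solution₁.x_mul, Pell.Solution₁.y_mul]
    congr 1 <;> ring

@[simp] theorem pellToUnitsHom_apply (e : ℤ) (s : Pell.Solution₁ e) :
    pellToUnitsHom e s = pellToUnit s := rfl

/-- The group of isometries of `NS(X)` preserving the ample cone (Case 1,
`End(X) = ℤ[√e]`, Gram matrix `G = diag(2, -2e)`) is generated by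
`Φ₀ = [[α₀, eβ₀],[β₀, α₀]]` (coming from the fundamental solution `(α₀, β₀)` of
`x² - ey² = 1`) and `T = diag(1, -1)`: every integer matrix `M` with `MᵀGM = G` and
positive top-left entry equals `Φ₀ᵏ` or `Φ₀ᵏ·T` for some `k ∈ ℤ` (here `Φ₀` is regarded
as a unit of the matrix ring, which it is since `det Φ₀ = 1`). -/
theorem isometry_group_generated (e : ℤ) (he : 0 < e) (hns : ¬ IsSquare e)
    (α₀ β₀ : ℤ) (hα₀ : 0 < α₀) (hβ₀ : 0 < β₀) (hPell : α₀ ^ 2 - e * β₀ ^ 2 = 1)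
    (hfund : ∀ α β : ℤ, 0 < α → 0 < β → α ^ 2 - e * β ^ 2 = 1 → α₀ ≤ α)
    (M : Matrix (Fin 2) (Fin 2) ℤ)
    (hiso : Matrix.transpose M * !![2, 0; 0, -2 * e] * M = !![2, 0; 0, -2 * e])
    (hM : 0 < M 0 0) :
    ∃ Φ₀ : (Matrix (Fin 2) (Fin 2) ℤ)ˣ,
      (Φ₀ : Matrix (Fin 2) (Fin 2) ℤ) = !![α₀, e * β₀; β₀, α₀] ∧
      ∃ k : ℤ, M = ((Φ₀ ^ k : (Matrix (Fin 2) (Fin 2) ℤ)ˣ) : Matrix (Fin 2) (Fin 2) ℤ) ∨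
        M = ((Φ₀ ^ k : (Matrix (Fin 2) (Fin 2) ℤ)ˣ) : Matrix (Fin 2) (Fin 2) ℤ) *
          !![1, 0; 0, -1] := by
  -- extract the scalar equations from the isometry condition
  have h00 := congrFun (congrFun hiso 0) 0
  have h01 := congrFun (congrFun hiso 0) 1
  have h11 := congrFun (congrFun hiso 1) 1
  simp [Matrix.mul_apply, Fin.sum_univ_two] at h00 h01 h11
  set a := M 0 0 with ha
  set b := M 0 1 with hb
  set c := M 1 0 with hc
  set d := M 1 1 with hd
  have hP : a ^ 2 - e * c ^ 2 = 1 := by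
    have h : 2 * (a ^ 2 - e * c ^ 2) = 2 * 1 := by linear_combination h00
    linarith
  have hE2 : a * b - e * (c * d) = 0 := by
    have h : 2 * (a * b - e * (c * d)) = 2 * 0 := by linear_combination h01
    linarith
  have hE3 : b ^ 2 - e * d ^ 2 + e = 0 := by
    have h : 2 * (b ^ 2 - e * d ^ 2 + e) = 2 * 0 := by linear_combination h11
    linarith
  have hsq : e * a ^ 2 = e * d ^ 2 := by
    linear_combination a ^ 2 * hE3 - (a * b + e * c * d) * hE2 + e * d ^ 2 * hP
  have h2 : a ^ 2 = d ^ 2 := mul_left_cancel₀ he.ne' hsq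
  have had : d = a ∨ d = -a := by
    have hz : (d - a) * (d + a) = 0 := by linear_combination -h2
    rcases mul_eq_zero.mp hz with h | h
    · left; linarith
    · right; linarith
  -- the fundamental Pell solution
  have he2 : 2 ≤ e := by
    have h1 : e ≠ 1 := fun h => hns (h ▸ ⟨1, rfl⟩)
    omega
  have hα1 : 1 < α₀ := by
    nlinarith [mul_pos he (mul_pos hβ₀ hβ₀), sq_nonneg (α₀ - 1)]
  set a₀ : Pell.Solution₁ e := Pell.Solution₁.mk α₀ β₀ hPell with ha₀
  have hfund' : Pell.IsFundamental a₀ := by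
    refine ⟨by rw [ha₀]; simpa using hα1, by rw [ha₀]; simpa using hβ₀, ?_⟩
    intro s hsx
    rw [ha₀, Pell.Solution₁.x_mk]
    have hsy : s.y ≠ 0 := by
      intro h0
      have hp := s.prop
      rw [h0] at hp
      nlinarith [hp, hsx]
    rcases hsy.lt_or_gt with h | h
    · exact hfund s.x (-s.y) (by linarith) (by linarith) (by linear_combination s.prop)
    · exact hfund s.x s.y (by linarith) h s.prop
  refine ⟨pellToUnitsHom e a₀, by simp [ha₀], ?_⟩
  -- classify the matrix N = [[a, ec],[c, a]] as a power of Φ₀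
  set s : Pell.Solution₁ e := Pell.Solution₁.mk a c hP with hs
  obtain ⟨n, hn⟩ := hfund'.eq_zpow_or_neg_zpow s
  have hn' : s = a₀ ^ n := by
    rcases hn with h | h
    · exact h
    · exfalso
      have hx1 : s.x = -((a₀ ^ n).x) := by rw [h, Pell.Solution₁.x_neg]
      have hx2 : 0 < (a₀ ^ n).x :=
        Pell.Solution₁.x_zpow_pos (by rw [ha₀]; simpa using hα₀) n
      have hx3 : s.x = a := by rw [hs, Pell.Solution₁.x_mk]
      omega
  have hNs : !![a, e * c; c, a] = ((pellToUnitsHom e a₀ ^ n :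
      (Matrix (Fin 2) (Fin 2) ℤ)ˣ) : Matrix (Fin 2) (Fin 2) ℤ) := by
    rw [← map_zpow (pellToUnitsHom e) a₀ n, ← hn']
    simp [hs]
  have hMeta : M = !![a, b; c, d] := Matrix.eta_fin_two M
  have hane : a ≠ 0 := hM.ne'
  refine ⟨n, ?_⟩
  rcases had with hda | hda
  · -- d = a, hence b = e c, and M = Φ₀^n
    left
    have hbc : b = e * c := by
      have : a * (b - e * c) = 0 := by rw [hda] at hE2; linear_combination hE2
      have := mul_eq_zero.mp this
      rcases this with h | h
      · exact absurd h hane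
      · linarith
    rw [hMeta, hbc, hda, ← hNs]
  · -- d = -a, hence b = -(e c), and M = Φ₀^n · T
    right
    have hbc : b = -(e * c) := by
      have : a * (b + e * c) = 0 := by rw [hda] at hE2; linear_combination hE2
      have := mul_eq_zero.mp this
      rcases this with h | h
      · exact absurd h hane
      · linarith
    rw [hMeta, hbc, hda, ← hNs, Matrix.mul_fin_two]
    norm_num
end
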